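/- Let L be a class of finite Δ-structures definable by a monadic SNP sentence without inequality (negated input atoms allowed). Then there exist a monadic signature Δ' disjoint from Δ and a finite set F' of structures in Rel^cov(Δ,Δ') such that L = Φ(Forb_full(F')): a finite Δ-structure A satisfies the sentence if and only if A has a lift A' ∈ Rel^cov(Δ,Δ') admitting no full homomorphism from any member of F'. -/

import Mathlib

/-- A finite relational structure of signature `σ`, where symbol `s : σ` has arity `ar s`.
`rel s` is the set of `ar s`-tuples (written as functions `Fin (ar s) → carrier`)
that are in the relation `s`. -/
structure RStruct (σ : Type) (ar : σ → ℕ) : Type 1 where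
  carrier : Type
  fin : Finite carrier
  rel : ∀ s : σ, Set (Fin (ar s) → carrier)

namespace RStruct

variable {σ σ' : Type} {ar : σ → ℕ} {ar' : σ' → ℕ}

/-- `f` is a homomorphism from `A` to `B`. -/
def IsHom (A B : RStruct σ ar) (f : A.carrier → B.carrier) : Prop :=
  ∀ s : σ, ∀ t ∈ A.rel s, (f ∘ t) ∈ B.rel s

/-- There exists a homomorphism `A → B`. -/
def Hom (A B : RStruct σ ar) : Prop := ∃ f, IsHom A B f

/-- Homomorphic equivalence. -/
def HomEquiv (A B : RStruct σ ar) : Prop := Hom A B ∧ Hom B A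

/-- `Forb F` : structures admitting no homomorphism from any member of `F`. -/
def Forb (F : Set (RStruct σ ar)) : Set (RStruct σ ar) :=
  {A | ∀ F0 ∈ F, ¬ Hom F0 A}

/-- `CSP D` : structures admitting a homomorphism to some member of `D`. -/
def CSP (D : Set (RStruct σ ar)) : Set (RStruct σ ar) :=
  {A | ∃ D0 ∈ D, Hom A D0}

/-- `A` has a cycle of length `n`: either (degenerate case `n = 1`) a relational tuple with
a repeated coordinate, or (`n ≥ 2`) pairwise distinct elements `x 0, …, x (n-1)` and pairwise
distinct relational tuples `r 0, …, r (n-1)` such that `r i` contains both `x i` and `x (i+1)`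
(indices cyclically, `x n = x 0`). -/
def HasCycleOfLength (A : RStruct σ ar) (n : ℕ) : Prop :=
  (n = 1 ∧ ∃ s : σ, ∃ t ∈ A.rel s, ¬ Function.Injective t) ∨
  (2 ≤ n ∧ ∃ x : ℕ → A.carrier, ∃ r : ℕ → Σ s : σ, Fin (ar s) → A.carrier,
    x n = x 0 ∧
    (∀ i < n, ∀ j < n, x i = x j → i = j) ∧
    (∀ i < n, ∀ j < n, r i = r j → i = j) ∧
    (∀ i < n, (r i).2 ∈ A.rel (r i).1 ∧ (∃ j, (r i).2 j = x i) ∧ (∃ j, (r i).2 j = x (i + 1))))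

def HasCycle (A : RStruct σ ar) : Prop := ∃ n, A.HasCycleOfLength n

/-- A forest is a structure with no cycle. -/
def IsForest (A : RStruct σ ar) : Prop := ¬ A.HasCycle

/-- The shadow (forgetful functor `Φ`) of a structure of the lifted signature `σ ⊕ σ'`:
forget the `σ'`-relations. -/
def shadow (A' : RStruct (σ ⊕ σ') (Sum.elim ar ar')) : RStruct σ ar :=
  ⟨A'.carrier, A'.fin, fun s => A'.rel (Sum.inl s)⟩

/-- The covering condition for lifted structures in which all symbols of `σ'` have the
common arity `r`: every `r`-tuple lies in some `σ'`-relation. -/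
def Covers (r : ℕ) (A' : RStruct (σ ⊕ σ') (Sum.elim ar fun _ => r)) : Prop :=
  ∀ t : Fin r → A'.carrier, ∃ s' : σ', t ∈ A'.rel (Sum.inr s')

end RStruct

/-- A clause of an SNP sentence with `n` universally quantified variables:
`¬(α ∧ β ∧ ε)`, given by positive and negated input atoms (`alpha`, `nalpha`),
positive and negated proof atoms (`beta`, `nbeta`) and inequalities `eps`. -/
structure SNPClause (σ : Type) (ar : σ → ℕ) (π : Type) (arP : π → ℕ) (n : ℕ) where
  alpha : List (Σ s : σ, Fin (ar s) → Fin n)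
  nalpha : List (Σ s : σ, Fin (ar s) → Fin n)
  beta : List (Σ p : π, Fin (arP p) → Fin n)
  nbeta : List (Σ p : π, Fin (arP p) → Fin n)
  eps : List (Fin n × Fin n)

/-- An SNP sentence `∃Π ∀x̄ ⋀ᵢ ¬(αᵢ ∧ βᵢ ∧ εᵢ)` over input signature `σ` with existential
(proof) signature `π`. -/
structure SNPSentence (σ : Type) (ar : σ → ℕ) (π : Type) (arP : π → ℕ) where
  nvars : ℕ
  clauses : List (SNPClause σ ar π arP nvars)

namespace SNPClause

variable {σ π : Type} {ar : σ → ℕ} {arP : π → ℕ} {n : ℕ}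

/-- The conjunction `α ∧ β ∧ ε` of a clause holds in `A` under the interpretation `P` of the
proof relations and the valuation `v` of the variables. -/
def Holds (c : SNPClause σ ar π arP n) (A : RStruct σ ar)
    (P : ∀ p : π, Set (Fin (arP p) → A.carrier)) (v : Fin n → A.carrier) : Prop :=
  (∀ a ∈ c.alpha, (v ∘ a.2) ∈ A.rel a.1) ∧
  (∀ a ∈ c.nalpha, (v ∘ a.2) ∉ A.rel a.1) ∧
  (∀ b ∈ c.beta, (v ∘ b.2) ∈ P b.1) ∧
  (∀ b ∈ c.nbeta, (v ∘ b.2) ∉ P b.1) ∧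
  (∀ e ∈ c.eps, v e.1 ≠ v e.2)

/-- The variable `x` occurs in the clause `c`. -/
def occurs (c : SNPClause σ ar π arP n) (x : Fin n) : Prop :=
  (∃ a ∈ c.alpha, ∃ j, a.2 j = x) ∨ (∃ a ∈ c.nalpha, ∃ j, a.2 j = x) ∨
  (∃ b ∈ c.beta, ∃ j, b.2 j = x) ∨ (∃ b ∈ c.nbeta, ∃ j, b.2 j = x) ∨
  (∃ e ∈ c.eps, e.1 = x ∨ e.2 = x)

end SNPClause

namespace SNPSentence

variable {σ π : Type} {ar : σ → ℕ} {arP : π → ℕ}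

/-- The finite structure `A` satisfies the SNP sentence `φ`: the proof relations can be
interpreted so that no clause conjunction is realized by any valuation. -/
def Sat (φ : SNPSentence σ ar π arP) (A : RStruct σ ar) : Prop :=
  ∃ P : ∀ p : π, Set (Fin (arP p) → A.carrier),
    ∀ v : Fin φ.nvars → A.carrier, ∀ c ∈ φ.clauses, ¬ c.Holds A P v

/-- Monotone: no negated input atoms. -/
def Monotone (φ : SNPSentence σ ar π arP) : Prop := ∀ c ∈ φ.clauses, c.nalpha = []

/-- Without inequality: no inequalities. -/
def NoIneq (φ : SNPSentence σ ar π arP) : Prop := ∀ c ∈ φ.clauses, c.eps = []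

/-- Primitive: in every clause, for every proof symbol `p` and every tuple of variables
occurring in the clause, either the corresponding atom or its negation occurs in the clause. -/
def Primitive (φ : SNPSentence σ ar π arP) : Prop :=
  ∀ c ∈ φ.clauses, ∀ p : π, ∀ t : Fin (arP p) → Fin φ.nvars,
    (∀ j, c.occurs (t j)) → (⟨p, t⟩ ∈ c.beta ∨ ⟨p, t⟩ ∈ c.nbeta)

end SNPSentence

namespace RStruct

/-- `f` is a full homomorphism from `A` to `B`: it preserves relations and non-relations. -/
def IsFullHom {σ : Type} {ar : σ → ℕ} (A B : RStruct σ ar) (f : A.carrier → B.carrier) : Prop :=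
  ∀ s : σ, ∀ t : Fin (ar s) → A.carrier, t ∈ A.rel s ↔ (f ∘ t) ∈ B.rel s

/-- There exists a full homomorphism `A → B`. -/
def HomFull {σ : Type} {ar : σ → ℕ} (A B : RStruct σ ar) : Prop :=
  ∃ f, IsFullHom A B f

end RStruct

open RStruct

section AuxHelpers

variable {σ π : Type} {ar : σ → ℕ}

/-- The unique index of a unary tuple. -/
def fz {m : ℕ} (hm : m = 1) : Fin m := ⟨0, by omega⟩

lemma unary_eq {m : ℕ} (hm : m = 1) {X : Type} (t : Fin m → X) (j : Fin m) :
    t = fun _ => t j := by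
  subst hm
  funext i
  rw [Subsingleton.elim i j]

/-- One-element lifted structure with input relations `U` and colors `C`. -/
def mkOne (ar : σ → ℕ) (U : Set σ) (C : Set (Set π)) :
    RStruct (σ ⊕ Set π) (Sum.elim ar fun _ => 1) where
  carrier := PUnit
  fin := inferInstance
  rel := fun s => match s with
    | .inl s0 => {_t | s0 ∈ U}
    | .inr S => {_t | S ∈ C}

/-- Lifted structure on `Fin n` with input relations `ρ` and coloring `χ₀`. -/
def mkCl (ar : σ → ℕ) (n : ℕ) (ρ : ∀ s : σ, Set (Fin (ar s) → Fin n))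
    (χ₀ : Fin n → Set π) :
    RStruct (σ ⊕ Set π) (Sum.elim ar fun _ => 1) where
  carrier := Fin n
  fin := inferInstance
  rel := fun s => match s with
    | .inl s0 => ρ s0
    | .inr S => {t | χ₀ (t (fz rfl)) = S}

/-- Lift of `A` given by a coloring `χ`. -/
def liftOf (A : RStruct σ ar) (χ : A.carrier → Set π) :
    RStruct (σ ⊕ Set π) (Sum.elim ar fun _ => 1) where
  carrier := A.carrier
  fin := A.fin
  rel := fun s => match s with
    | .inl s0 => A.rel s0
    | .inr S => {t | χ (t (fz rfl)) = S}

end AuxHelpers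

/-- every class of finite `Δ`-structures defined by a monadic SNP sentence
without inequality (negated input atoms allowed) equals `Φ(Forb_full F')` for a monadic lift
signature `σ'` and a finite set `F'` of covering lifted structures, where forbidding is via
full homomorphisms. -/
theorem monadic_noineq_snp_as_forbidden_full_lifts {σ π : Type} {ar : σ → ℕ} {arP : π → ℕ}
    [Finite σ] [Finite π]
    (φ : SNPSentence σ ar π arP) (hmonadic : ∀ p : π, arP p = 1) (hnoineq : φ.NoIneq) :
    ∃ (σ' : Type) (_ : Finite σ')
      (F' : Set (RStruct (σ ⊕ σ') (Sum.elim ar fun _ => 1))),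
      F'.Finite ∧ (∀ F0 ∈ F', Covers 1 F0) ∧
      ∀ A : RStruct σ ar,
        φ.Sat A ↔ ∃ A' : RStruct (σ ⊕ σ') (Sum.elim ar fun _ => 1),
          Covers 1 A' ∧ shadow A' = A ∧ ∀ F0 ∈ F', ¬ HomFull F0 A' := by
  classical
  refine ⟨Set π, inferInstance,
    ((fun p : Set σ × Set (Set π) => mkOne ar p.1 p.2) ''
        {p | ∃ S ∈ p.2, ∃ T ∈ p.2, S ≠ T}) ∪
    ((fun q : Fin φ.clauses.length × (∀ s : σ, Set (Fin (ar s) → Fin φ.nvars)) ×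
          (Fin φ.nvars → Set π) =>
        mkCl ar φ.nvars q.2.1 q.2.2) ''
      {q | (φ.clauses.get q.1).Holds ⟨Fin φ.nvars, inferInstance, q.2.1⟩
          (fun p => {t | p ∈ q.2.2 (t (fz (hmonadic p)))}) id}),
    Set.Finite.union ((Set.toFinite _).image _) ((Set.toFinite _).image _), ?_, ?_⟩
  · rintro F0 (⟨p, hp, rfl⟩ | ⟨q, hq, rfl⟩)
    · obtain ⟨S, hS, T, hT, hne⟩ := hp
      exact fun t => ⟨S, hS⟩
    · intro t
      exact ⟨q.2.2 (t (fz rfl)), rfl⟩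
  · intro A
    constructor
    · rintro ⟨P, hP⟩
      set χ : A.carrier → Set π := fun a => {p | (fun _ => a) ∈ P p} with hχdef
      refine ⟨liftOf A χ, fun t => ⟨χ (t (fz rfl)), rfl⟩, rfl, ?_⟩
      rintro F0 (⟨⟨U, C⟩, hp, rfl⟩ | ⟨⟨i, ρ, χ₀⟩, hq, rfl⟩) ⟨f, hf⟩
      · obtain ⟨S, hS, T, hT, hne⟩ := hp
        have hS' : χ (f PUnit.unit) = S :=
          (hf (Sum.inr S) (fun _ => PUnit.unit)).mp hS
        have hT' : χ (f PUnit.unit) = T :=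
          (hf (Sum.inr T) (fun _ => PUnit.unit)).mp hT
        exact hne (hS'.symm.trans hT')
      · have hcmem : φ.clauses.get i ∈ φ.clauses := List.get_mem φ.clauses i
        refine hP f (φ.clauses.get i) hcmem ?_
        have hcol : ∀ x : Fin φ.nvars, χ (f x) = χ₀ x := fun x =>
          (hf (Sum.inr (χ₀ x)) (fun _ => x)).mp rfl
        obtain ⟨h1, h2, h3, h4, h5⟩ := hq
        refine ⟨?_, ?_, ?_, ?_, ?_⟩
        · intro a ha
          exact (hf (Sum.inl a.1) a.2).mp (h1 a ha)
        · intro a ha hmem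
          exact h2 a ha ((hf (Sum.inl a.1) a.2).mpr hmem)
        · intro b hb
          have h := h3 b hb
          erw [unary_eq (hmonadic b.1) (f ∘ b.2) (fz (hmonadic b.1))]
          have hx : b.1 ∈ χ (f (b.2 (fz (hmonadic b.1)))) := by
            rw [hcol]; exact h
          exact hx
        · intro b hb hmem
          erw [unary_eq (hmonadic b.1) (f ∘ b.2) (fz (hmonadic b.1))] at hmem
          have hx : b.1 ∈ χ (f (b.2 (fz (hmonadic b.1)))) := hmem
          rw [hcol] at hx
          exact h4 b hb hx
        · intro e he
          rw [hnoineq _ hcmem] at he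
          exact absurd he (List.not_mem_nil (a := e))
    · rintro ⟨A', hcov, rfl, hforb⟩
      have huniq : ∀ a : A'.carrier, ∀ S T, (fun _ : Fin 1 => a) ∈ A'.rel (Sum.inr S) →
          (fun _ : Fin 1 => a) ∈ A'.rel (Sum.inr T) → S = T := by
        intro a S T hS hT
        by_contra hne
        refine hforb (mkOne ar {s | (fun _ : Fin (ar s) => a) ∈ A'.rel (Sum.inl s)}
            {S' | (fun _ : Fin 1 => a) ∈ A'.rel (Sum.inr S')})
          (Or.inl ⟨⟨_, _⟩, ⟨S, hS, T, hT, hne⟩, rfl⟩) ⟨fun _ => a, ?_⟩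
        intro s t
        cases s with
        | inl s0 => exact Iff.rfl
        | inr S' => exact Iff.rfl
      have hone : ∀ a : A'.carrier, ∃ S, (fun _ : Fin 1 => a) ∈ A'.rel (Sum.inr S) :=
        fun a => hcov (fun _ => a)
      choose χ hχ using hone
      refine ⟨fun p => {t | p ∈ χ (t (fz (hmonadic p)))}, ?_⟩
      intro v c hc hHolds
      obtain ⟨h1, h2, h3, h4, h5⟩ := hHolds
      obtain ⟨i, hi⟩ := List.mem_iff_get.mp hc
      refine hforb
        (mkCl ar φ.nvars (fun s => {t | (v ∘ t) ∈ A'.rel (Sum.inl s)}) (fun x => χ (v x)))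
        (Or.inr ⟨⟨i, fun s => {t | (v ∘ t) ∈ A'.rel (Sum.inl s)}, fun x => χ (v x)⟩,
          ?_, rfl⟩) ⟨v, ?_⟩
      · simp only [Set.mem_setOf_eq]
        rw [hi]
        refine ⟨?_, ?_, ?_, ?_, ?_⟩
        · intro a ha; exact h1 a ha
        · intro a ha; exact h2 a ha
        · intro b hb; exact h3 b hb
        · intro b hb; exact h4 b hb
        · intro e he; rw [hnoineq c hc] at he; exact absurd he (List.not_mem_nil (a := e))
      · intro s t
        cases s with
        | inl s0 => exact Iff.rfl
        | inr S =>
          constructor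
          · intro he
            have he' : χ (v (t (fz rfl))) = S := he
            erw [unary_eq rfl (v ∘ t) (fz rfl)]
            exact he' ▸ hχ (v (t (fz rfl)))
          · intro hm2
            erw [unary_eq rfl (v ∘ t) (fz rfl)] at hm2
            show χ (v (t (fz rfl))) = S
            exact huniq (v (t (fz rfl))) _ _ (hχ (v (t (fz rfl)))) hm2
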